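/- arXiv:1301.4949 — 3 statements merged into one kernel-verified Lean document; each statement's English description precedes it below -/
import Mathlib

section
/- For every nonzero v ∈ V with weight components v = Σ_{α ∈ R(v)} v_α and every X ∈ 𝔞, the moment map of exp(π(X))v is the weighted average m_𝔞(exp(π(X))v) = (Σ_{α ∈ R(v)} e^{2⟨X,α⟩}‖v_α‖² α) / (Σ_{α ∈ R(v)} e^{2⟨X,α⟩}‖v_α‖²). In particular, m_𝔞(exp(π(X))v) lies in the intrinsic interior of the convex hull of R(v). -/
open scoped InnerProductSpace
open Finset
open scoped Classical

/-- The (restricted) moment map of a linear family of operators `π` on an inner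
product space `V`: `m v` is the unique element of `E` with
`⟪m v, X⟫ = ⟪π X v, v⟫ / ‖v‖²` for all `X`. -/
noncomputable def momentMap {E V : Type*} [NormedAddCommGroup E] [InnerProductSpace ℝ E]
    [FiniteDimensional ℝ E] [NormedAddCommGroup V] [InnerProductSpace ℝ V]
    (π : E →ₗ[ℝ] V →L[ℝ] V) (v : V) : E :=
  (InnerProductSpace.toDual ℝ E).symm <| LinearMap.toContinuousLinearMap
    { toFun := fun X => ⟪(π X) v, v⟫_ℝ / ‖v‖ ^ 2
      map_add' := fun X Y => by
        simp [map_add, ContinuousLinearMap.add_apply, inner_add_left, add_div]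
      map_smul' := fun c X => by
        simp [map_smul, ContinuousLinearMap.smul_apply, inner_smul_left, mul_div_assoc] }

open Nat in
lemma exp_apply_eigen {V : Type*} [NormedAddCommGroup V] [InnerProductSpace ℝ V]
    [FiniteDimensional ℝ V] (A : V →L[ℝ] V) {t : ℝ} {w : V} (h : A w = t • w) :
    NormedSpace.exp A w = Real.exp t • w := by
  have hpow : ∀ n : ℕ, (A ^ n) w = t ^ n • w := by
    intro n
    induction n with
    | zero => simp
    | succ n ih =>
      rw [pow_succ, pow_succ, ContinuousLinearMap.mul_apply, h, map_smul, ih, smul_smul,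
        mul_comm]
  have hs : Summable fun n : ℕ => ((n ! : ℝ))⁻¹ • A ^ n :=
    NormedSpace.expSeries_summable' (𝕂 := ℝ) A
  have hs2 : Summable fun n : ℕ => ((n ! : ℝ))⁻¹ * t ^ n := by
    simpa [smul_eq_mul] using NormedSpace.expSeries_summable' (𝕂 := ℝ) t
  have h1 := (ContinuousLinearMap.apply ℝ V w).map_tsum hs
  rw [NormedSpace.exp_eq_tsum ℝ]
  have h2 : (∑' n : ℕ, ((n ! : ℝ))⁻¹ • A ^ n) w = ∑' n : ℕ, (((n ! : ℝ))⁻¹ * t ^ n) • w := by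
    rw [show (∑' n : ℕ, ((n ! : ℝ))⁻¹ • A ^ n) w
        = (ContinuousLinearMap.apply ℝ V w) (∑' n : ℕ, ((n ! : ℝ))⁻¹ • A ^ n) from rfl, h1]
    congr 1
    ext n
    simp [hpow n, smul_smul]
  rw [h2, hs2.tsum_smul_const]
  congr 1
  rw [Real.exp_eq_exp_ℝ, NormedSpace.exp_eq_tsum ℝ]
  simp [smul_eq_mul]

lemma strict_combo_mem_intrinsicInterior_convexHull {𝔞 : Type*} [NormedAddCommGroup 𝔞]
    [InnerProductSpace ℝ 𝔞] [FiniteDimensional ℝ 𝔞] (Rv : Finset 𝔞) (u : 𝔞 → ℝ)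
    (hpos : ∀ α ∈ Rv, 0 < u α) (husum : ∑ α ∈ Rv, u α = 1) :
    ∑ α ∈ Rv, u α • α ∈ intrinsicInterior ℝ (convexHull ℝ (Rv : Set 𝔞)) := by
  classical
  have hne : Rv.Nonempty := by
    rcases Rv.eq_empty_or_nonempty with h | h
    · simp [h] at husum
    · exact h
  obtain ⟨β₀, hβ₀⟩ := id hne
  set m : 𝔞 := ∑ α ∈ Rv, u α • α with hm
  have hmhull : m ∈ convexHull ℝ (Rv : Set 𝔞) := by
    have hcm : Rv.centerMass u id = m := by
      rw [Rv.centerMass_eq_of_sum_1 _ husum]; simp [hm]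
    rw [← hcm]
    exact Rv.centerMass_mem_convexHull (fun i hi => (hpos i hi).le) (by rw [husum]; norm_num)
      (fun i hi => by exact_mod_cast hi)
  have hmspan : m ∈ affineSpan ℝ (convexHull ℝ (Rv : Set 𝔞)) :=
    mem_affineSpan ℝ hmhull
  set L : ({x // x ∈ Rv} → ℝ) →ₗ[ℝ] 𝔞 :=
    Fintype.linearCombination ℝ (fun i : {x // x ∈ Rv} => (i : 𝔞) - β₀) with hL
  set W := (affineSpan ℝ (convexHull ℝ (Rv : Set 𝔞))).direction with hW
  have hWvs : W = vectorSpan ℝ (Rv : Set 𝔞) := by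
    rw [hW, affineSpan_convexHull, direction_affineSpan]
  have hLW : ∀ f : {x // x ∈ Rv} → ℝ, L f ∈ W := by
    intro f
    rw [hWvs, hL, Fintype.linearCombination_apply]
    exact Submodule.sum_mem _ fun i _ => Submodule.smul_mem _ _
      (vsub_mem_vectorSpan ℝ (by exact_mod_cast i.2) (by exact_mod_cast hβ₀))
  have hWL : W ≤ LinearMap.range L := by
    rw [hWvs, vectorSpan_def, Submodule.span_le]
    rintro x ⟨a, ha, b, hb, rfl⟩
    refine ⟨Pi.single ⟨a, ha⟩ 1 - Pi.single ⟨b, hb⟩ 1, ?_⟩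
    rw [map_sub, hL, Fintype.linearCombination_apply_single, Fintype.linearCombination_apply_single]
    simp [vsub_eq_sub]
  set L' : ({x // x ∈ Rv} → ℝ) →ₗ[ℝ] W := L.codRestrict W hLW with hL'
  have hLsurj : Function.Surjective L' := by
    rintro ⟨w, hw⟩
    obtain ⟨f, hf⟩ := hWL hw
    exact ⟨f, Subtype.ext (by simpa [hL', LinearMap.codRestrict_apply] using hf)⟩
  obtain ⟨g, hg⟩ := L'.exists_rightInverse_of_surjective (LinearMap.range_eq_top.2 hLsurj)
  have hLg : ∀ d : W, L (g d) = (d : 𝔞) := by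
    intro d
    have h1 : L' (g d) = d := by
      rw [← LinearMap.comp_apply, hg, LinearMap.id_apply]
    have := congrArg Subtype.val h1
    simpa [hL', LinearMap.codRestrict_apply] using this
  have hgc : Continuous g := g.continuous_of_finiteDimensional
  obtain ⟨αm, hαm, hmin⟩ := Rv.exists_min_image u hne
  set ε : ℝ := u αm / (Rv.card + 2) with hε
  have hεpos : 0 < ε := div_pos (hpos αm hαm) (by positivity)
  have hcard : (Rv.card + 2 : ℝ) * ε = u αm := by
    rw [hε]; field_simp
  have hcε : (0 : ℝ) ≤ (Rv.card : ℝ) * ε := mul_nonneg (Nat.cast_nonneg _) hεpos.le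
  have h0 : g 0 = 0 := map_zero g
  obtain ⟨δ, hδpos, hδ⟩ := Metric.continuousAt_iff.1 hgc.continuousAt (ε := ε) hεpos
  rw [mem_intrinsicInterior]
  refine ⟨⟨m, hmspan⟩, ?_, rfl⟩
  rw [mem_interior_iff_mem_nhds, Metric.mem_nhds_iff]
  refine ⟨δ, hδpos, ?_⟩
  rintro ⟨z, hz⟩ hzball
  simp only [Set.mem_preimage]
  have hd : z - m ∈ W := by
    rw [hW]
    exact AffineSubspace.vsub_mem_direction hz hmspan
  have hdn : ‖(⟨z - m, hd⟩ : W)‖ < δ := by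
    have : dist (⟨z, hz⟩ : affineSpan ℝ (convexHull ℝ (Rv : Set 𝔞))) ⟨m, hmspan⟩ < δ := hzball
    rw [Subtype.dist_eq] at this
    simpa [dist_eq_norm] using this
  set e : {x // x ∈ Rv} → ℝ := g ⟨z - m, hd⟩ with he
  have heb : ∀ i : {x // x ∈ Rv}, |e i| < ε := by
    intro i
    have h1 : dist (⟨z - m, hd⟩ : W) 0 < δ := by simpa [dist_eq_norm] using hdn
    have h2 := hδ h1
    rw [h0, dist_eq_norm, sub_zero] at h2
    calc |e i| = ‖e i‖ := (Real.norm_eq_abs _).symm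
      _ ≤ ‖g ⟨z - m, hd⟩‖ := norm_le_pi_norm _ i
      _ < ε := h2
  have hesum : |∑ i : {x // x ∈ Rv}, e i| ≤ Rv.card * ε := by
    calc |∑ i : {x // x ∈ Rv}, e i| ≤ ∑ i : {x // x ∈ Rv}, |e i| :=
          Finset.abs_sum_le_sum_abs _ _
      _ ≤ Finset.univ.card • ε := Finset.sum_le_card_nsmul _ _ _ (fun i _ => (heb i).le)
      _ = Rv.card * ε := by
          rw [Finset.card_univ, Fintype.card_coe, nsmul_eq_mul]
  set i₀ : {x // x ∈ Rv} := ⟨β₀, hβ₀⟩ with hi₀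
  set w' : {x // x ∈ Rv} → ℝ :=
    fun i => u i + e i + (if i = i₀ then -(∑ j : {x // x ∈ Rv}, e j) else 0) with hw'
  have hw'pos : ∀ i : {x // x ∈ Rv}, 0 < w' i := by
    intro i
    have h1 := abs_lt.1 (heb i)
    have h2 : u αm ≤ u i := hmin i i.2
    have h3 := abs_le.1 hesum
    simp only [hw']
    by_cases hii : i = i₀
    · rw [if_pos hii]; linarith
    · rw [if_neg hii]; linarith
  have hw'sum : ∑ i : {x // x ∈ Rv}, w' i = 1 := by
    simp only [hw']
    rw [Finset.sum_add_distrib, Finset.sum_add_distrib, Finset.sum_ite_eq' Finset.univ i₀]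
    simp only [Finset.mem_univ, if_pos]
    have h4 : ∑ i : {x // x ∈ Rv}, u i = 1 := by
      rw [Finset.sum_coe_sort Rv u]; exact husum
    linarith
  have hzval : ∑ i : {x // x ∈ Rv}, w' i • (i : 𝔞) = z := by
    have hLe : L e = z - m := by rw [he, hLg]
    have hLe' : ∑ i : {x // x ∈ Rv}, e i • ((i : 𝔞) - β₀) = z - m := by
      have h5 := hLe
      rw [hL, Fintype.linearCombination_apply] at h5
      exact h5
    have hm' : ∑ i : {x // x ∈ Rv}, u i • (i : 𝔞) = m := by
      rw [hm, ← Finset.sum_coe_sort Rv (fun α => u α • α)]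
    have hsplit : ∑ i : {x // x ∈ Rv}, e i • (i : 𝔞)
        = z - m + (∑ i : {x // x ∈ Rv}, e i) • β₀ := by
      have : ∑ i : {x // x ∈ Rv}, e i • ((i : 𝔞) - β₀)
          = ∑ i : {x // x ∈ Rv}, e i • (i : 𝔞) - (∑ i : {x // x ∈ Rv}, e i) • β₀ := by
        simp_rw [smul_sub, Finset.sum_sub_distrib, Finset.sum_smul]
      rw [this] at hLe'
      linear_combination (norm := abel) hLe'
    have hite : ∑ i : {x // x ∈ Rv}, (if i = i₀ then -(∑ j : {x // x ∈ Rv}, e j) else 0) • (i : 𝔞)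
        = -((∑ j : {x // x ∈ Rv}, e j) • β₀) := by
      simp only [ite_smul, zero_smul]
      rw [Finset.sum_ite_eq' Finset.univ i₀
        (fun i : {x // x ∈ Rv} => (-(∑ j : {x // x ∈ Rv}, e j)) • (i : 𝔞))]
      simp [neg_smul, hi₀]
    calc ∑ i : {x // x ∈ Rv}, w' i • (i : 𝔞)
        = ∑ i : {x // x ∈ Rv}, (u i • (i : 𝔞) + e i • (i : 𝔞)
            + (if i = i₀ then -(∑ j : {x // x ∈ Rv}, e j) else 0) • (i : 𝔞)) := by
          refine Finset.sum_congr rfl fun i _ => ?_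
          simp only [hw']
          rw [add_smul, add_smul]
      _ = z := by
          rw [Finset.sum_add_distrib, Finset.sum_add_distrib, hm', hsplit, hite]
          abel
  -- conclude z ∈ convexHull
  have : z ∈ convexHull ℝ (Rv : Set 𝔞) := by
    have hcm : Finset.univ.centerMass w' (fun i : {x // x ∈ Rv} => (i : 𝔞)) = z := by
      rw [Finset.centerMass_eq_of_sum_1 _ _ hw'sum]
      exact hzval
    rw [← hcm]
    exact Finset.centerMass_mem_convexHull _ (fun i _ => (hw'pos i).le)
      (by rw [hw'sum]; norm_num) (fun i _ => by exact_mod_cast i.2)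
  exact this

/-- the moment map along the `A`-orbit of `v` is the weighted average
`m(exp(π X)v) = (Σ_{α∈R(v)} e^{2⟪X,α⟫}‖v_α‖² α) / (Σ_{α∈R(v)} e^{2⟪X,α⟫}‖v_α‖²)`,
which lies in the intrinsic interior of the convex hull of `R(v)`. -/
theorem momentMap_exp_eq_weighted_average
    {𝔞 V : Type*} [NormedAddCommGroup 𝔞] [InnerProductSpace ℝ 𝔞] [FiniteDimensional ℝ 𝔞]
    [NormedAddCommGroup V] [InnerProductSpace ℝ V] [FiniteDimensional ℝ V]
    (π : 𝔞 →ₗ[ℝ] V →L[ℝ] V)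
    (hsa : ∀ X : 𝔞, ∀ v w : V, ⟪(π X) v, w⟫_ℝ = ⟪v, (π X) w⟫_ℝ)
    (hcomm : ∀ X Y : 𝔞, Commute (π X) (π Y))
    (ΔV : Finset 𝔞) (v : V) (hv : v ≠ 0)
    -- `c α` is the component of `v` in the weight space `V_α`:
    (c : 𝔞 → V)
    (hc : ∀ α ∈ ΔV, ∀ X : 𝔞, (π X) (c α) = ⟪α, X⟫_ℝ • c α)
    (hsum : v = ∑ α ∈ ΔV, c α)
    (Rv : Finset 𝔞) (hRv : Rv = ΔV.filter fun α => c α ≠ 0)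
    (X : 𝔞) :
    momentMap π ((NormedSpace.exp (π X)) v) =
      (∑ α ∈ Rv, Real.exp (2 * ⟪X, α⟫_ℝ) * ‖c α‖ ^ 2)⁻¹ •
        ∑ α ∈ Rv, (Real.exp (2 * ⟪X, α⟫_ℝ) * ‖c α‖ ^ 2) • α ∧
    momentMap π ((NormedSpace.exp (π X)) v) ∈
      intrinsicInterior ℝ (convexHull ℝ (Rv : Set 𝔞)) := by
  classical
  have hsub : ∀ γ ∈ Rv, γ ∈ ΔV := by
    intro γ hγ; rw [hRv] at hγ; exact (Finset.mem_filter.1 hγ).1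
  have hneq0 : ∀ γ ∈ Rv, c γ ≠ 0 := by
    intro γ hγ; rw [hRv] at hγ; exact (Finset.mem_filter.1 hγ).2
  -- orthogonality of weight components
  have horth : ∀ α ∈ ΔV, ∀ β ∈ ΔV, α ≠ β → ⟪c α, c β⟫_ℝ = 0 := by
    intro α hα β hβ hne
    have h1 := hsa (α - β) (c α) (c β)
    rw [hc α hα _, hc β hβ _, real_inner_smul_left, real_inner_smul_right] at h1
    have h2 : (⟪α, α - β⟫_ℝ - ⟪β, α - β⟫_ℝ) * ⟪c α, c β⟫_ℝ = 0 := by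
      rw [sub_mul, h1, sub_self]
    have h3 : ⟪α, α - β⟫_ℝ - ⟪β, α - β⟫_ℝ = ⟪α - β, α - β⟫_ℝ := (inner_sub_left _ _ _).symm
    rw [h3] at h2
    rcases mul_eq_zero.1 h2 with h | h
    · exact absurd (sub_eq_zero.1 (inner_self_eq_zero.1 h)) hne
    · exact h
  -- the exponential of v
  have hw : NormedSpace.exp (π X) v = ∑ α ∈ Rv, Real.exp ⟪α, X⟫_ℝ • c α := by
    rw [hsum, map_sum, Finset.sum_congr rfl (fun α hα => exp_apply_eigen (π X) (hc α hα X)),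
      hRv]
    refine (Finset.sum_filter_of_ne ?_).symm
    intro x hx hfx hc0
    exact hfx (by rw [hc0, smul_zero])
  -- the key orthogonality computation
  have key : ∀ f g : 𝔞 → ℝ,
      ⟪∑ α ∈ Rv, f α • c α, ∑ β ∈ Rv, g β • c β⟫_ℝ = ∑ α ∈ Rv, f α * g α * ‖c α‖ ^ 2 := by
    intro f g
    rw [sum_inner]
    refine Finset.sum_congr rfl fun α hα => ?_
    rw [inner_sum, Finset.sum_eq_single α]
    · rw [real_inner_smul_left, real_inner_smul_right, real_inner_self_eq_norm_sq]
      ring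
    · intro β hβ hne
      rw [real_inner_smul_left, real_inner_smul_right,
        horth α (hsub α hα) β (hsub β hβ) (Ne.symm hne)]
      ring
    · intro hα'
      exact absurd hα hα'
  set S : ℝ := ∑ α ∈ Rv, Real.exp (2 * ⟪X, α⟫_ℝ) * ‖c α‖ ^ 2 with hS
  have hRvne : Rv.Nonempty := by
    by_contra h
    rw [Finset.not_nonempty_iff_eq_empty] at h
    apply hv
    rw [hsum]
    refine Finset.sum_eq_zero fun α hα => ?_
    by_contra hc0
    have hmem : α ∈ Rv := by rw [hRv]; exact Finset.mem_filter.2 ⟨hα, hc0⟩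
    rw [h] at hmem
    exact absurd hmem (Finset.notMem_empty α)
  have hSpos : 0 < S := by
    refine Finset.sum_pos (fun α hα => ?_) hRvne
    exact mul_pos (Real.exp_pos _) (pow_pos (norm_pos_iff.2 (hneq0 α hα)) 2)
  have hexp2 : ∀ α : 𝔞, Real.exp ⟪α, X⟫_ℝ * Real.exp ⟪α, X⟫_ℝ = Real.exp (2 * ⟪X, α⟫_ℝ) := by
    intro α
    rw [← Real.exp_add]
    congr 1
    rw [real_inner_comm X α]
    ring
  have hwnorm : ‖NormedSpace.exp (π X) v‖ ^ 2 = S := by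
    rw [← real_inner_self_eq_norm_sq, hw, key]
    refine Finset.sum_congr rfl fun α hα => ?_
    rw [← hexp2 α]
  have hπw : ∀ Y : 𝔞, (π Y) (NormedSpace.exp (π X) v)
      = ∑ α ∈ Rv, (Real.exp ⟪α, X⟫_ℝ * ⟪α, Y⟫_ℝ) • c α := by
    intro Y
    rw [hw, map_sum]
    refine Finset.sum_congr rfl fun α hα => ?_
    rw [map_smul, hc α (hsub α hα) Y, smul_smul]
  -- part 1
  have h1 : momentMap π ((NormedSpace.exp (π X)) v)
      = S⁻¹ • ∑ α ∈ Rv, (Real.exp (2 * ⟪X, α⟫_ℝ) * ‖c α‖ ^ 2) • α := by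
    simp only [momentMap]
    apply (InnerProductSpace.toDual ℝ 𝔞).injective
    rw [LinearIsometryEquiv.apply_symm_apply]
    ext Y
    simp only [LinearMap.coe_toContinuousLinearMap', LinearMap.coe_mk, AddHom.coe_mk,
      InnerProductSpace.toDual_apply_apply]
    rw [hwnorm, hπw Y, hw, key, real_inner_smul_left, sum_inner]
    simp_rw [real_inner_smul_left]
    rw [div_eq_inv_mul]
    congr 1
    refine Finset.sum_congr rfl fun α hα => ?_
    rw [← hexp2 α]
    ring
  refine ⟨h1, ?_⟩
  rw [h1, Finset.smul_sum]
  simp_rw [smul_smul]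
  refine strict_combo_mem_intrinsicInterior_convexHull Rv
    (fun α => S⁻¹ * (Real.exp (2 * ⟪X, α⟫_ℝ) * ‖c α‖ ^ 2)) (fun α hα => ?_) ?_
  · exact mul_pos (inv_pos.2 hSpos)
      (mul_pos (Real.exp_pos _) (pow_pos (norm_pos_iff.2 (hneq0 α hα)) 2))
  · rw [← Finset.mul_sum, ← hS, inv_mul_cancel₀ hSpos.ne']
end

section
/- Let v ∈ V be nonzero and set β = m_𝔞(v). Then: (a) β lies in the intrinsic interior of the convex hull of R(v); and (b) π(β)v = ‖β‖²v (i.e., v is a critical point of the norm squared of the moment map restricted to 𝔞) if and only if β = mcc(R(v)), the minimal convex combination of R(v). -/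
open scoped InnerProductSpace
open Finset
open scoped Classical

lemma pos_combo_mem_intrinsicInterior
    {E : Type*} [NormedAddCommGroup E] [InnerProductSpace ℝ E] [FiniteDimensional ℝ E]
    (S : Finset E) (t : E → ℝ) (ht : ∀ α ∈ S, 0 < t α) (h1 : ∑ α ∈ S, t α = 1) :
    (∑ α ∈ S, t α • α) ∈ intrinsicInterior ℝ (convexHull ℝ (S : Set E)) := by
  classical
  set β := ∑ α ∈ S, t α • α with hβdef
  have hSne : S.Nonempty := by
    by_contra h
    rw [Finset.not_nonempty_iff_eq_empty] at h
    simp [h] at h1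
  have hβhull : β ∈ convexHull ℝ (S : Set E) := by
    have := S.centerMass_mem_convexHull (fun α hα => (ht α hα).le)
      (by rw [h1]; norm_num) (fun α hα => Finset.mem_coe.mpr hα)
    rwa [Finset.centerMass, h1, inv_one, one_smul] at this
  have hβspan : β ∈ affineSpan ℝ (S : Set E) :=
    convexHull_subset_affineSpan _ hβhull
  set W : Submodule ℝ E := vectorSpan ℝ (S : Set E) with hW
  have hαβW : ∀ α ∈ S, α - β ∈ W := by
    intro α hα
    have h1' : α ∈ affineSpan ℝ (S : Set E) := subset_affineSpan ℝ _ hα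
    have := AffineSubspace.vsub_mem_direction h1' hβspan
    rwa [direction_affineSpan] at this
  let L : (↥S → ℝ) →ₗ[ℝ] E :=
    ∑ α : ↥S, LinearMap.smulRight (LinearMap.proj α) ((α : E) - β)
  have hLapply : ∀ s : ↥S → ℝ, L s = ∑ α : ↥S, s α • ((α : E) - β) := by
    intro s; simp [L]
  have hLsingle : ∀ a : ↥S, L (Pi.single a 1) = (a : E) - β := by
    intro a
    rw [hLapply]
    rw [Finset.sum_eq_single a]
    · simp
    · intro b _ hb; simp [Pi.single_eq_of_ne hb]
    · simp
  have hWle : W ≤ LinearMap.range L := by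
    rw [hW, vectorSpan_def]
    apply Submodule.span_le.mpr
    rintro z hz
    rw [Set.mem_vsub] at hz
    obtain ⟨x, hx, y, hy, rfl⟩ := hz
    refine ⟨Pi.single ⟨x, hx⟩ 1 - Pi.single ⟨y, hy⟩ 1, ?_⟩
    rw [map_sub, hLsingle, hLsingle]
    simp [vsub_eq_sub]
  have hLW : ∀ s : ↥S → ℝ, L s ∈ W := by
    intro s
    rw [hLapply]
    exact Submodule.sum_mem _ fun α _ => Submodule.smul_mem _ _ (hαβW α α.2)
  let L' : (↥S → ℝ) →ₗ[ℝ] W := L.codRestrict W hLW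
  have hL'surj : LinearMap.range L' = ⊤ := by
    rw [LinearMap.range_eq_top]
    intro w
    obtain ⟨s, hs⟩ := hWle w.2
    exact ⟨s, Subtype.ext (by simpa [L', LinearMap.codRestrict_apply] using hs)⟩
  obtain ⟨σ₀, hσ₀⟩ := L'.exists_rightInverse_of_surjective hL'surj
  let σ : E →ₗ[ℝ] (↥S → ℝ) := σ₀ ∘ₗ (Submodule.orthogonalProjection W).toLinearMap
  have hσ : ∀ w ∈ W, L (σ w) = w := by
    intro w hw
    have hproj : (Submodule.orthogonalProjection W w : E) = w :=
      (Submodule.starProjection_eq_self_iff).mpr hw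
    have h2 : L' (σ₀ (Submodule.orthogonalProjection W w)) = Submodule.orthogonalProjection W w := by
      rw [← LinearMap.comp_apply, hσ₀]; rfl
    have h3 : L (σ₀ (Submodule.orthogonalProjection W w)) = (Submodule.orthogonalProjection W w : E) :=
      congrArg Subtype.val h2
    simpa [σ, hproj] using h3
  have hσcont : Continuous σ := σ.continuous_of_finiteDimensional
  set ε : ℝ := S.inf' hSne t with hεdef
  have hεpos : 0 < ε := by
    rw [hεdef, Finset.lt_inf'_iff]
    exact ht
  have hε1 : ε ≤ 1 := by
    obtain ⟨α₀, hα₀⟩ := hSne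
    have h2 : ε ≤ t α₀ := Finset.inf'_le t hα₀
    have h3 : t α₀ ≤ 1 := h1 ▸ Finset.single_le_sum (fun i hi => (ht i hi).le) hα₀
    linarith
  set n : ℕ := S.card with hndef
  set δ : ℝ := ε / (2 * (n + 1)) with hδdef
  have hnpos : (0:ℝ) < (n:ℝ) + 1 := by positivity
  have hδpos : 0 < δ := by positivity
  have hδeq : ((n:ℝ) + 1) * δ = ε / 2 := by
    rw [hδdef]; field_simp
  set U : Set E := (fun x => σ (x - β)) ⁻¹' {s : ↥S → ℝ | ∀ α : ↥S, |s α| < δ} with hUdef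
  have hUopen : IsOpen U := by
    apply IsOpen.preimage (hσcont.comp (continuous_id.sub continuous_const))
    have : {s : ↥S → ℝ | ∀ α : ↥S, |s α| < δ}
        = Set.pi Set.univ (fun _ : ↥S => Metric.ball (0:ℝ) δ) := by
      ext s
      simp [Real.dist_eq]
    rw [this]
    exact isOpen_set_pi Set.finite_univ fun _ _ => Metric.isOpen_ball
  have hβU : β ∈ U := by
    simp [hUdef, hδpos]
  have hkey : ∀ x ∈ U, x ∈ affineSpan ℝ (S : Set E) → x ∈ convexHull ℝ (S : Set E) := by
    intro x hxU hxspan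
    have hwW : x - β ∈ W := by
      have := AffineSubspace.vsub_mem_direction hxspan hβspan
      rwa [direction_affineSpan] at this
    set s : ↥S → ℝ := σ (x - β) with hsdef
    have hLs : ∑ α : ↥S, s α • ((α : E) - β) = x - β := by
      rw [← hLapply]; exact hσ _ hwW
    have hsmall : ∀ α : ↥S, |s α| < δ := hxU
    set Sg : ℝ := ∑ α : ↥S, s α with hSgdef
    have hSgabs : |Sg| ≤ (n:ℝ) * δ := by
      calc |Sg| ≤ ∑ α : ↥S, |s α| := Finset.abs_sum_le_sum_abs _ _
        _ ≤ ∑ _α : ↥S, δ := Finset.sum_le_sum fun α _ => (hsmall α).le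
        _ = (n:ℝ) * δ := by
            rw [Finset.sum_const, Finset.card_univ, Fintype.card_coe, nsmul_eq_mul]
    have hSgle : Sg ≤ (n:ℝ) * δ := (le_abs_self _).trans hSgabs
    have hSgge : -((n:ℝ) * δ) ≤ Sg := by
      have := (abs_le.mp hSgabs).1; linarith
    have hnδ : (n:ℝ) * δ ≤ ε / 2 := by nlinarith
    set u : ↥S → ℝ := fun α => s α + (1 - Sg) * t α with hudef
    have htsum : ∑ α : ↥S, t (α : E) = 1 := by rw [Finset.sum_coe_sort]; exact h1
    have hu0 : ∀ α : ↥S, 0 ≤ u α := by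
      intro α
      have htα : ε ≤ t (α : E) := Finset.inf'_le t α.2
      have htα1 : t (α : E) ≤ 1 :=
        h1 ▸ Finset.single_le_sum (fun i hi => (ht i hi).le) α.2
      have hsα := abs_lt.mp (hsmall α)
      have h1Sg : 1 - (n:ℝ) * δ ≤ 1 - Sg := by linarith
      have h1Sg0 : (0:ℝ) ≤ 1 - (n:ℝ)*δ := by linarith
      have hprod : (1 - (n:ℝ)*δ) * ε ≤ (1 - Sg) * t (α : E) :=
        mul_le_mul h1Sg htα hεpos.le (by linarith)
      have hmul : (n:ℝ)*δ*ε ≤ (n:ℝ)*δ :=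
        mul_le_of_le_one_right (mul_nonneg (Nat.cast_nonneg n) hδpos.le) hε1
      have hua : u α = s α + (1 - Sg) * t (α : E) := rfl
      linarith [hsα.1]
    have husum : ∑ α : ↥S, u α = 1 := by
      simp only [hudef]
      rw [Finset.sum_add_distrib, ← Finset.mul_sum, htsum]
      ring
    have hβs : ∑ α : ↥S, t (α : E) • (α : E) = β :=
      Finset.sum_coe_sort S (fun α => t α • α)
    have hx : ∑ α : ↥S, u α • (α : E) = x := by
      have e1 : ∑ α : ↥S, u α • (α : E)
          = ∑ α : ↥S, s α • (α : E) + (1 - Sg) • ∑ α : ↥S, t (α : E) • (α : E) := by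
        rw [Finset.smul_sum, ← Finset.sum_add_distrib]
        apply Finset.sum_congr rfl
        intro α _
        simp [hudef, add_smul, mul_smul]
      have e2 : ∑ α : ↥S, s α • ((α : E) - β)
          = ∑ α : ↥S, s α • (α : E) - Sg • β := by
        rw [hSgdef, Finset.sum_smul, ← Finset.sum_sub_distrib]
        apply Finset.sum_congr rfl
        intro α _
        rw [smul_sub]
      have e3 : ∑ α : ↥S, s α • (α : E) = (x - β) + Sg • β := by
        rw [← hLs, e2]; abel
      rw [e1, e3, hβs, sub_smul, one_smul]
      abel
    have := Finset.centerMass_mem_convexHull (t := (Finset.univ : Finset ↥S))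
      (w := u) (z := fun α => (α : E)) (s := (S : Set E))
      (fun α _ => hu0 α) (by rw [husum]; norm_num) (fun α _ => Finset.mem_coe.mpr α.2)
    rwa [Finset.centerMass, husum, inv_one, one_smul, hx] at this
  rw [mem_intrinsicInterior]
  refine ⟨⟨β, subset_affineSpan ℝ _ hβhull⟩, ?_, rfl⟩
  have hsub : (Subtype.val ⁻¹' U : Set (affineSpan ℝ (convexHull ℝ (S : Set E))))
      ⊆ Subtype.val ⁻¹' (convexHull ℝ (S : Set E)) := by
    intro x hx
    have hx2 : (x : E) ∈ affineSpan ℝ (S : Set E) := by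
      rw [← affineSpan_convexHull]
      exact x.2
    exact hkey _ hx hx2
  have hopen : IsOpen (Subtype.val ⁻¹' U :
      Set (affineSpan ℝ (convexHull ℝ (S : Set E)))) :=
    hUopen.preimage continuous_subtype_val
  exact interior_maximal hsub hopen hβU

/-- for `β = m_𝔞(v)`: (a) `β` lies in the intrinsic interior of the
convex hull of `R(v)`; (b) `π(β)v = ‖β‖²v` iff `β` is the minimal convex
combination `mcc(R(v))` (the point of minimal norm in the convex hull of `R(v)`). -/
theorem momentMap_mem_intrinsicInterior_and_critical_iff_mcc
    {𝔞 V : Type*} [NormedAddCommGroup 𝔞] [InnerProductSpace ℝ 𝔞] [FiniteDimensional ℝ 𝔞]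
    [NormedAddCommGroup V] [InnerProductSpace ℝ V] [FiniteDimensional ℝ V]
    (π : 𝔞 →ₗ[ℝ] V →L[ℝ] V)
    (hsa : ∀ X : 𝔞, ∀ v w : V, ⟪(π X) v, w⟫_ℝ = ⟪v, (π X) w⟫_ℝ)
    (hcomm : ∀ X Y : 𝔞, Commute (π X) (π Y))
    (ΔV : Finset 𝔞) (v : V) (hv : v ≠ 0)
    -- `c α` is the component of `v` in the weight space `V_α`:
    (c : 𝔞 → V)
    (hc : ∀ α ∈ ΔV, ∀ X : 𝔞, (π X) (c α) = ⟪α, X⟫_ℝ • c α)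
    (hsum : v = ∑ α ∈ ΔV, c α)
    (Rv : Finset 𝔞) (hRv : Rv = ΔV.filter fun α => c α ≠ 0)
    (β : 𝔞) (hβ : β = momentMap π v)
    -- `mcc` is the (unique) point of minimal norm in the convex hull of `R(v)`:
    (mcc : 𝔞) (hmcc₁ : mcc ∈ convexHull ℝ (Rv : Set 𝔞))
    (hmcc₂ : ∀ y ∈ convexHull ℝ (Rv : Set 𝔞), ‖mcc‖ ≤ ‖y‖) :
    β ∈ intrinsicInterior ℝ (convexHull ℝ (Rv : Set 𝔞)) ∧
    ((π β) v = (‖β‖ ^ 2) • v ↔ β = mcc) := by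
  classical
  have hv2 : (0:ℝ) < ‖v‖^2 := pow_pos (norm_pos_iff.mpr hv) 2
  have hβinner : ∀ X : 𝔞, ⟪β, X⟫_ℝ = ⟪(π X) v, v⟫_ℝ / ‖v‖^2 := by
    intro X
    rw [hβ, momentMap, InnerProductSpace.toDual_symm_apply]
    rfl
  have horth : ∀ α ∈ ΔV, ∀ α' ∈ ΔV, α ≠ α' → ⟪c α, c α'⟫_ℝ = 0 := by
    intro α hα α' hα' hne
    have h1 := hsa (α - α') (c α) (c α')
    rw [hc α hα, hc α' hα', real_inner_smul_left, real_inner_smul_right] at h1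
    have h3 : ⟪α - α', α - α'⟫_ℝ * ⟪c α, c α'⟫_ℝ = 0 := by
      rw [inner_sub_left, sub_mul, h1, sub_self]
    rcases mul_eq_zero.mp h3 with h | h
    · exact absurd h (inner_self_ne_zero.mpr (sub_ne_zero.mpr hne))
    · exact h
  have hπv : ∀ X : 𝔞, (π X) v = ∑ α ∈ ΔV, ⟪α, X⟫_ℝ • c α := by
    intro X
    rw [hsum, map_sum]
    exact Finset.sum_congr rfl fun α hα => hc α hα X
  have hinner_piv : ∀ X : 𝔞, ⟪(π X) v, v⟫_ℝ = ∑ α ∈ ΔV, ⟪α, X⟫_ℝ * ‖c α‖^2 := by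
    intro X
    calc ⟪(π X) v, v⟫_ℝ
        = ⟪∑ α ∈ ΔV, ⟪α, X⟫_ℝ • c α, ∑ α' ∈ ΔV, c α'⟫_ℝ := by rw [← hπv X, ← hsum]
      _ = ∑ α ∈ ΔV, ∑ α' ∈ ΔV, ⟪α, X⟫_ℝ * ⟪c α, c α'⟫_ℝ := by
          rw [sum_inner]
          apply Finset.sum_congr rfl
          intro α _
          rw [real_inner_smul_left, inner_sum, Finset.mul_sum]
      _ = ∑ α ∈ ΔV, ⟪α, X⟫_ℝ * ‖c α‖^2 := by
          apply Finset.sum_congr rfl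
          intro α hα
          rw [Finset.sum_eq_single α]
          · rw [real_inner_self_eq_norm_sq]
          · intro b hb hbne
            rw [horth α hα b hb (fun h => hbne h.symm), mul_zero]
          · intro h; exact absurd hα h
  have hnormv : ‖v‖^2 = ∑ α ∈ ΔV, ‖c α‖^2 := by
    have h0 : ⟪v, v⟫_ℝ = ∑ α ∈ ΔV, ∑ α' ∈ ΔV, ⟪c α, c α'⟫_ℝ := by
      conv_lhs => rw [hsum]
      rw [sum_inner]
      exact Finset.sum_congr rfl fun α _ => inner_sum _ _ _
    rw [← real_inner_self_eq_norm_sq, h0]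
    apply Finset.sum_congr rfl
    intro α hα
    rw [Finset.sum_eq_single α]
    · rw [real_inner_self_eq_norm_sq]
    · intro b hb hbne
      exact horth α hα b hb (fun h => hbne h.symm)
    · intro h; exact absurd hα h
  set t : 𝔞 → ℝ := fun α => ‖c α‖^2 / ‖v‖^2 with htdef
  have hβsumΔ : β = ∑ α ∈ ΔV, t α • α := by
    apply ext_inner_right ℝ
    intro X
    rw [hβinner X, hinner_piv X, sum_inner, Finset.sum_div]
    apply Finset.sum_congr rfl
    intro α _
    rw [real_inner_smul_left]
    simp only [htdef]
    ring
  have hβsum : β = ∑ α ∈ Rv, t α • α := by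
    rw [hβsumΔ, hRv]
    refine (Finset.sum_filter_of_ne ?_).symm
    intro α hα hne hc0
    apply hne
    simp [htdef, hc0]
  have htpos : ∀ α ∈ Rv, 0 < t α := by
    intro α hα
    rw [hRv, Finset.mem_filter] at hα
    exact div_pos (pow_pos (norm_pos_iff.mpr hα.2) 2) hv2
  have htsum1 : ∑ α ∈ Rv, t α = 1 := by
    have h0 : ∑ α ∈ Rv, t α = ∑ α ∈ ΔV, t α := by
      rw [hRv]
      refine Finset.sum_filter_of_ne ?_
      intro α hα hne hc0
      exact hne (by simp [htdef, hc0])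
    rw [h0]
    simp only [htdef]
    rw [← Finset.sum_div, ← hnormv, div_self hv2.ne']
  have parta : β ∈ intrinsicInterior ℝ (convexHull ℝ (Rv : Set 𝔞)) := by
    rw [hβsum]
    exact pos_combo_mem_intrinsicInterior Rv t htpos htsum1
  have hβhull : β ∈ convexHull ℝ (Rv : Set 𝔞) := intrinsicInterior_subset parta
  refine ⟨parta, ?_, ?_⟩
  · -- critical → β = mcc
    intro hcrit
    have heq : ∀ α₀ ∈ Rv, ⟪α₀, β⟫_ℝ = ‖β‖^2 := by
      intro α₀ hα₀
      have hα₀Δ : α₀ ∈ ΔV := by rw [hRv] at hα₀; exact (Finset.mem_filter.mp hα₀).1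
      have hc0 : c α₀ ≠ 0 := by rw [hRv] at hα₀; exact (Finset.mem_filter.mp hα₀).2
      have h2 : ⟪(π β) v, c α₀⟫_ℝ = ⟪α₀, β⟫_ℝ * ‖c α₀‖^2 := by
        rw [hπv β, sum_inner, Finset.sum_eq_single α₀]
        · rw [real_inner_smul_left, real_inner_self_eq_norm_sq]
        · intro b hb hbne
          rw [real_inner_smul_left, horth b hb α₀ hα₀Δ hbne, mul_zero]
        · intro h; exact absurd hα₀Δ h
      have h3 : ⟪(‖β‖^2 : ℝ) • v, c α₀⟫_ℝ = ‖β‖^2 * ‖c α₀‖^2 := by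
        rw [real_inner_smul_left]
        congr 1
        conv_lhs => rw [hsum]
        rw [sum_inner, Finset.sum_eq_single α₀]
        · rw [real_inner_self_eq_norm_sq]
        · intro b hb hbne
          exact horth b hb α₀ hα₀Δ hbne
        · intro h; exact absurd hα₀Δ h
      rw [hcrit] at h2
      have h4 : ⟪α₀, β⟫_ℝ * ‖c α₀‖^2 = ‖β‖^2 * ‖c α₀‖^2 := by rw [← h2, h3]
      have h5 : ‖c α₀‖^2 ≠ 0 := pow_ne_zero _ (norm_ne_zero_iff.mpr hc0)
      exact mul_right_cancel₀ h5 h4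
    have hlin : IsLinearMap ℝ (fun w : 𝔞 => ⟪β, w⟫_ℝ) := by
      constructor
      · intro x y; exact inner_add_right β x y
      · intro r x; rw [real_inner_smul_right, smul_eq_mul]
    have hplane : convexHull ℝ (Rv : Set 𝔞) ⊆ {w : 𝔞 | ⟪β, w⟫_ℝ = ‖β‖^2} := by
      apply convexHull_min
      · intro α hα
        rw [Set.mem_setOf_eq, real_inner_comm]
        exact heq α (Finset.mem_coe.mp hα)
      · exact convex_hyperplane hlin _
    have hB : ⟪β, mcc⟫_ℝ = ‖β‖^2 := hplane hmcc₁
    have hle : ‖mcc‖ ≤ ‖β‖ := hmcc₂ β hβhull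
    have hz : ‖β - mcc‖^2 ≤ 0 := by
      rw [norm_sub_sq_real, hB]
      nlinarith [norm_nonneg mcc, norm_nonneg β]
    have hz2 : ‖β - mcc‖^2 = 0 := le_antisymm hz (by positivity)
    have : β - mcc = 0 := by
      rw [pow_eq_zero_iff (by norm_num : 2 ≠ 0), norm_eq_zero] at hz2
      exact hz2
    exact sub_eq_zero.mp this
  · -- β = mcc → critical
    intro hβm
    have hnn : ∀ α ∈ Rv, 0 ≤ ⟪β, α - β⟫_ℝ := by
      intro α hα
      by_contra hlt
      push_neg at hlt
      have hαhull : α ∈ convexHull ℝ (Rv : Set 𝔞) :=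
        subset_convexHull ℝ _ (Finset.mem_coe.mpr hα)
      have hq0 : α - β ≠ 0 := by
        intro h0
        rw [h0, inner_zero_right] at hlt
        exact absurd hlt (lt_irrefl 0)
      set g : ℝ := ⟪β, α - β⟫_ℝ with hg
      set q : ℝ := ‖α - β‖^2 with hq
      have hqpos : 0 < q := pow_pos (norm_pos_iff.mpr hq0) 2
      set θ : ℝ := min 1 (-g / q) with hθ
      have hθpos : 0 < θ := lt_min one_pos (div_pos (neg_pos.mpr hlt) hqpos)
      have hθ1 : θ ≤ 1 := min_le_left _ _
      have hmem : β + θ • (α - β) ∈ convexHull ℝ (Rv : Set 𝔞) := by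
        have h0 := (convex_convexHull ℝ (Rv : Set 𝔞)) hβhull hαhull
          (by linarith : (0:ℝ) ≤ 1 - θ) hθpos.le (by ring)
        convert h0 using 1
        module
      have hnle : ‖β‖ ≤ ‖β + θ • (α - β)‖ := by
        have := hmcc₂ _ hmem
        rwa [← hβm] at this
      have hnorm2 : ‖β‖^2 ≤ ‖β + θ • (α - β)‖^2 := by
        nlinarith [norm_nonneg (β + θ • (α - β)), norm_nonneg β]
      have hexp : ‖β + θ • (α - β)‖^2 = ‖β‖^2 + 2*θ*g + θ^2*q := by
        rw [norm_add_sq_real, real_inner_smul_right, norm_smul, Real.norm_eq_abs,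
          mul_pow, sq_abs, hq, hg]
        ring
      have h6 : 0 ≤ 2*θ*g + θ^2*q := by
        rw [hexp] at hnorm2
        linarith
      have h7 : θ * q ≤ -g := by
        have hθle : θ ≤ -g / q := min_le_right _ _
        calc θ * q ≤ (-g / q) * q := mul_le_mul_of_nonneg_right hθle hqpos.le
          _ = -g := by field_simp
      nlinarith [mul_le_mul_of_nonneg_left h7 hθpos.le, mul_pos hθpos (neg_pos.mpr hlt)]
    have hsumz : ∑ α ∈ Rv, t α * ⟪β, α - β⟫_ℝ = 0 := by
      calc ∑ α ∈ Rv, t α * ⟪β, α - β⟫_ℝ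
          = ⟪β, ∑ α ∈ Rv, t α • (α - β)⟫_ℝ := by
            rw [inner_sum]
            exact Finset.sum_congr rfl fun α _ => (real_inner_smul_right _ _ _).symm
        _ = ⟪β, β - β⟫_ℝ := by
            congr 1
            simp_rw [smul_sub]
            rw [Finset.sum_sub_distrib, ← Finset.sum_smul, htsum1, one_smul, ← hβsum]
        _ = 0 := by simp
    have hzero := (Finset.sum_eq_zero_iff_of_nonneg
      (fun α hα => mul_nonneg (htpos α hα).le (hnn α hα))).mp hsumz
    have hip : ∀ α ∈ Rv, ⟪α, β⟫_ℝ = ‖β‖^2 := by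
      intro α hα
      have h8 := hzero α hα
      rcases mul_eq_zero.mp h8 with h | h
      · exact absurd h (htpos α hα).ne'
      · rw [inner_sub_right] at h
        rw [real_inner_comm, ← real_inner_self_eq_norm_sq]
        linarith
    rw [hπv β, hsum, Finset.smul_sum]
    apply Finset.sum_congr rfl
    intro α hα
    by_cases h0 : c α = 0
    · simp [h0]
    · have hαR : α ∈ Rv := by rw [hRv]; exact Finset.mem_filter.mpr ⟨hα, h0⟩
      rw [hip α hαR]
end

section
/- Let W ⊆ V be a nice space and let w ∈ W∖{0}. If mcc(R(w)) lies in the intrinsic interior of the convex hull of R(w), then there exists X ∈ 𝔞 such that w̃ = exp(π(X))w satisfies m_𝔤(w̃) = mcc(R(w)) and π(m_𝔤(w̃))w̃ = ‖mcc(R(w))‖² w̃; in particular, the orbit of w contains a critical point of the norm squared of the moment map, i.e., the orbit is distinguished. -/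
open scoped InnerProductSpace
open Finset
open scoped Classical

/-- The weight space `V_α = {v : ∀ X ∈ 𝔞, π(X)v = ⟪α,X⟫v}`. -/
def wtSpace {E V : Type*} [NormedAddCommGroup E] [InnerProductSpace ℝ E]
    [NormedAddCommGroup V] [InnerProductSpace ℝ V]
    (π : E →ₗ[ℝ] V →L[ℝ] V) (𝔞 : Submodule ℝ E) (α : E) : Submodule ℝ V where
  carrier := {v | ∀ X ∈ 𝔞, (π X) v = ⟪α, X⟫_ℝ • v}
  add_mem' := fun {a b} ha hb X hX => by rw [map_add, ha X hX, hb X hX, smul_add]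
  zero_mem' := fun X hX => by simp
  smul_mem' := fun t a ha X hX => by rw [map_smul, ha X hX, smul_comm]

/-- The (restricted) root space `𝔤_γ = {Y : ∀ X ∈ 𝔞, [X,Y] = ⟪γ,X⟫Y}`. -/
def rootSpace {E : Type*} [NormedAddCommGroup E] [InnerProductSpace ℝ E]
    (bk : E →ₗ[ℝ] E →ₗ[ℝ] E) (𝔞 : Submodule ℝ E) (γ : E) : Submodule ℝ E where
  carrier := {Y | ∀ X ∈ 𝔞, bk X Y = ⟪γ, X⟫_ℝ • Y}
  add_mem' := fun {a b} ha hb X hX => by rw [map_add, ha X hX, hb X hX, smul_add]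
  zero_mem' := fun X hX => by simp
  smul_mem' := fun t a ha X hX => by rw [map_smul, ha X hX, smul_comm]

/-- A subspace `W ⊆ V` is `A`-invariant if `π(X)W ⊆ W` for all `X ∈ 𝔞`. -/
def AInvariant {E V : Type*} [NormedAddCommGroup E] [InnerProductSpace ℝ E]
    [NormedAddCommGroup V] [InnerProductSpace ℝ V]
    (π : E →ₗ[ℝ] V →L[ℝ] V) (𝔞 : Submodule ℝ E) (W : Submodule ℝ V) : Prop :=
  ∀ X ∈ 𝔞, ∀ w ∈ W, (π X) w ∈ W

/-- An `A`-invariant subspace `W ⊆ V` is a nice space if `momentMap π w ∈ 𝔞` for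
every nonzero `w ∈ W`. -/
def IsNiceSpace {E V : Type*} [NormedAddCommGroup E] [InnerProductSpace ℝ E]
    [FiniteDimensional ℝ E] [NormedAddCommGroup V] [InnerProductSpace ℝ V]
    (π : E →ₗ[ℝ] V →L[ℝ] V) (𝔞 : Submodule ℝ E) (W : Submodule ℝ V) : Prop :=
  AInvariant π 𝔞 W ∧ ∀ w ∈ W, w ≠ 0 → momentMap π w ∈ 𝔞


section Helpers

variable {E V : Type*}

set_option maxHeartbeats 2000000 in
lemma exp_applyHasSum [NormedAddCommGroup V] [NormedSpace ℝ V]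
    [CompleteSpace V] (A : V →L[ℝ] V) (v : V) :
    HasSum (fun n : ℕ => ((n.factorial : ℝ)⁻¹ • (A ^ n)) v) (NormedSpace.exp A v) :=
  (NormedSpace.exp_series_hasSum_exp' (𝕂 := ℝ) A).mapL (ContinuousLinearMap.apply ℝ V v)

lemma exp_apply_eigen_s4 [NormedAddCommGroup V] [NormedSpace ℝ V]
    [CompleteSpace V] (A : V →L[ℝ] V) (c : ℝ) (v : V) (h : A v = c • v) :
    NormedSpace.exp A v = Real.exp c • v := by
  have hpow : ∀ n : ℕ, (A ^ n) v = c ^ n • v := by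
    intro n
    induction n with
    | zero => simp
    | succ n ih =>
      rw [pow_succ', pow_succ', ContinuousLinearMap.mul_apply, ih, map_smul, h,
        smul_smul, mul_comm]
  have h1 : HasSum (fun n : ℕ => ((n.factorial : ℝ)⁻¹ * c ^ n) • v)
      (NormedSpace.exp A v) := by
    have h0 := exp_applyHasSum A v
    have heq : (fun n : ℕ => ((n.factorial : ℝ)⁻¹ • (A ^ n)) v)
        = fun n : ℕ => ((n.factorial : ℝ)⁻¹ * c ^ n) • v := by
      funext n
      rw [ContinuousLinearMap.smul_apply, hpow, smul_smul]
    rwa [heq] at h0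
  have h2 : HasSum (fun n : ℕ => ((n.factorial : ℝ)⁻¹ * c ^ n) • v)
      (Real.exp c • v) := by
    have h3 : HasSum (fun n : ℕ => (n.factorial : ℝ)⁻¹ * c ^ n) (Real.exp c) := by
      have := NormedSpace.exp_series_hasSum_exp' (𝕂 := ℝ) c
      rw [← Real.exp_eq_exp_ℝ] at this
      simpa [smul_eq_mul] using this
    exact h3.smul_const v
  exact h1.unique h2

lemma exp_apply_mem [NormedAddCommGroup V] [NormedSpace ℝ V]
    [CompleteSpace V] (A : V →L[ℝ] V) (W : Submodule ℝ V) (hcl : IsClosed (W : Set V))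
    (hW : ∀ v ∈ W, A v ∈ W) (v : V) (hv : v ∈ W) :
    NormedSpace.exp A v ∈ W := by
  have hpow : ∀ n : ℕ, (A ^ n) v ∈ W := by
    intro n
    induction n with
    | zero => simpa using hv
    | succ n ih => rw [pow_succ', ContinuousLinearMap.mul_apply]; exact hW _ ih
  refine hcl.mem_of_tendsto (exp_applyHasSum A v).tendsto_sum_nat ?_
  filter_upwards with n
  exact Submodule.sum_mem W fun i _ => Submodule.smul_mem W _ (hpow i)

/-- Variational inequality for the minimal-norm point of a convex set. -/
lemma varineq [NormedAddCommGroup E] [InnerProductSpace ℝ E]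
    {s : Set E} (hconv : Convex ℝ s) {m : E} (hm : m ∈ s)
    (hmin : ∀ y ∈ s, ‖m‖ ≤ ‖y‖) {y : E} (hy : y ∈ s) :
    0 ≤ ⟪y - m, m⟫_ℝ := by
  by_contra hneg
  push_neg at hneg
  set p : ℝ := ⟪y - m, m⟫_ℝ
  have hym : y ≠ m := by
    intro h
    simp [p, h] at hneg
  set q : ℝ := ‖y - m‖ ^ 2 with hq
  have hymne : y - m ≠ 0 := sub_ne_zero.mpr hym
  have hqpos : 0 < q := by
    rw [hq]
    have : 0 < ‖y - m‖ := norm_pos_iff.mpr hymne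
    positivity
  set t : ℝ := min 1 (-p / q) with ht
  have htpos : 0 < t := lt_min one_pos (div_pos (by linarith) hqpos)
  have ht1 : t ≤ 1 := min_le_left _ _
  have htq : t * q ≤ -p := by
    have := min_le_right 1 (-p / q)
    calc t * q ≤ (-p / q) * q := by nlinarith
    _ = -p := by field_simp
  have hz : m + t • (y - m) ∈ s := by
    have := hconv hm hy (a := 1 - t) (b := t) (by linarith) (le_of_lt htpos) (by ring)
    convert this using 1
    module
  have hn := hmin _ hz
  have hsq : ‖m‖ ^ 2 ≤ ‖m + t • (y - m)‖ ^ 2 := by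
    have h1 : (0:ℝ) ≤ ‖m‖ := norm_nonneg _
    nlinarith [norm_nonneg (m + t • (y - m))]
  rw [norm_add_sq_real, real_inner_smul_right, norm_smul, Real.norm_eq_abs,
    abs_of_pos htpos] at hsq
  have hip : ⟪m, y - m⟫_ℝ = p := real_inner_comm _ _
  rw [hip] at hsq
  have hexp : (t * ‖y - m‖) ^ 2 = t ^ 2 * q := by rw [hq]; ring
  rw [hexp] at hsq
  nlinarith [mul_le_mul_of_nonneg_left htq (le_of_lt htpos)]

/-- From the intrinsic interior one can move a bit in any direction of the affine span. -/
lemma exists_pos_forward [NormedAddCommGroup E] [InnerProductSpace ℝ E]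
    {s : Set E} {m : E} (hint : m ∈ intrinsicInterior ℝ s)
    {X : E} (hX : X ∈ (affineSpan ℝ s).direction) :
    ∃ δ : ℝ, 0 < δ ∧ m + δ • X ∈ s := by
  obtain ⟨y, hy, hym⟩ := hint
  have hmem : ∀ t : ℝ, m + t • X ∈ affineSpan ℝ s := by
    intro t
    have hmspan : m ∈ affineSpan ℝ s := by rw [← hym]; exact y.2
    have := AffineSubspace.vadd_mem_of_mem_direction
      (Submodule.smul_mem _ t hX) hmspan
    simpa [vadd_eq_add, add_comm] using this
  set γ : ℝ → affineSpan ℝ s := fun t => ⟨m + t • X, hmem t⟩ with hγ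
  have hcont : Continuous γ := by
    apply Continuous.subtype_mk
    exact continuous_const.add (continuous_id.smul continuous_const)
  have hγ0 : γ 0 = y := by
    apply Subtype.ext
    simp [γ, ← hym]
  have hopen : IsOpen (γ ⁻¹' interior (Subtype.val ⁻¹' s)) :=
    isOpen_interior.preimage hcont
  have h0 : (0:ℝ) ∈ γ ⁻¹' interior (Subtype.val ⁻¹' s) := by
    simp only [Set.mem_preimage, hγ0]; exact hy
  obtain ⟨ε, hε, hball⟩ := Metric.isOpen_iff.mp hopen 0 h0
  refine ⟨ε / 2, by positivity, ?_⟩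
  have hmemint : γ (ε / 2) ∈ interior (Subtype.val ⁻¹' s) := by
    apply hball
    rw [Metric.mem_ball, Real.dist_eq, sub_zero, abs_of_pos (by positivity)]
    linarith
  have hmem2 : γ (ε / 2) ∈ (Subtype.val ⁻¹' s : Set (affineSpan ℝ s)) :=
    interior_subset hmemint
  exact hmem2

set_option maxHeartbeats 4000000 in
lemma exists_stationary [NormedAddCommGroup E] [InnerProductSpace ℝ E]
    [FiniteDimensional ℝ E]
    (s : Finset E) (hs : s.Nonempty) (c : E → ℝ) (hc : ∀ α ∈ s, 0 < c α) (m : E)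
    (hpos : ∀ X : E, X ∈ Submodule.span ℝ ((fun α => α - m) '' (s : Set E)) → X ≠ 0 →
      ∃ α ∈ s, 0 < ⟪α - m, X⟫_ℝ) :
    ∃ X₀ ∈ Submodule.span ℝ ((fun α => α - m) '' (s : Set E)),
      ∑ α ∈ s, (c α * Real.exp (2 * ⟪α - m, X₀⟫_ℝ)) • (α - m) = 0 := by
  classical
  set L : Submodule ℝ E := Submodule.span ℝ ((fun α => α - m) '' (s : Set E)) with hL
  by_cases hbot : L = ⊥
  · refine ⟨0, Submodule.zero_mem L, ?_⟩
    have hzero : ∀ α ∈ s, α - m = 0 := by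
      intro α hα
      have : α - m ∈ L := Submodule.subset_span ⟨α, hα, rfl⟩
      rwa [hbot, Submodule.mem_bot] at this
    refine Finset.sum_eq_zero fun α hα => by rw [hzero α hα, smul_zero]
  -- nontrivial case
  have hmemL : ∀ α ∈ s, α - m ∈ L := fun α hα => Submodule.subset_span ⟨α, hα, rfl⟩
  set n : ℕ := s.card with hn
  have hnpos : 0 < (n:ℝ) := by exact_mod_cast Finset.card_pos.mpr hs
  set F : E → ℝ := fun X => ∑ α ∈ s, c α * Real.exp (2 * ⟪α - m, X⟫_ℝ) with hF
  have hFcont : Continuous F := by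
    apply continuous_finset_sum
    intro α _
    exact continuous_const.mul (Real.continuous_exp.comp
      (continuous_const.mul (Continuous.inner continuous_const continuous_id)))
  set p : E → ℝ := fun X => ∑ α ∈ s, max ⟪α - m, X⟫_ℝ 0 with hp
  have hpcont : Continuous p := by
    apply continuous_finset_sum
    intro α _
    exact (Continuous.inner continuous_const continuous_id).max continuous_const
  have hppos : ∀ X ∈ L, X ≠ 0 → 0 < p X := by
    intro X hXL hX0
    obtain ⟨α, hα, hip⟩ := hpos X hXL hX0
    have h1 : max ⟪α - m, X⟫_ℝ 0 ≤ p X :=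
      Finset.single_le_sum (f := fun β => max ⟪β - m, X⟫_ℝ 0)
        (fun β _ => le_max_right _ _) hα
    calc (0:ℝ) < ⟪α - m, X⟫_ℝ := hip
      _ ≤ max ⟪α - m, X⟫_ℝ 0 := le_max_left _ _
      _ ≤ p X := h1
  -- minimum of p on the unit sphere of L
  obtain ⟨x1, hx1L, hx10⟩ := Submodule.exists_mem_ne_zero_of_ne_bot hbot
  have hx1n : ‖x1‖ ≠ 0 := norm_ne_zero_iff.mpr hx10
  set u1 : L := (‖x1‖⁻¹ : ℝ) • ⟨x1, hx1L⟩ with hu1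
  have hu1s : u1 ∈ Metric.sphere (0 : L) 1 := by
    simp only [Metric.mem_sphere, dist_zero_right, hu1, norm_smul, norm_inv,
      Real.norm_eq_abs, abs_norm]
    rw [show ‖(⟨x1, hx1L⟩ : L)‖ = ‖x1‖ from rfl]
    exact inv_mul_cancel₀ hx1n
  have hsphne : (Metric.sphere (0 : L) 1).Nonempty := ⟨u1, hu1s⟩
  have hsphcpt : IsCompact (Metric.sphere (0 : L) 1) := isCompact_sphere 0 1
  set q : L → ℝ := fun u => p (u : E) with hq
  have hqcont : Continuous q := hpcont.comp continuous_subtype_val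
  obtain ⟨u0, hu0s, hu0min⟩ := hsphcpt.exists_isMinOn hsphne hqcont.continuousOn
  have hu0norm : ‖(u0 : E)‖ = 1 := by
    have := hu0s
    simpa [Metric.mem_sphere, dist_zero_right] using this
  set k : ℝ := q u0 with hk
  have hkpos : 0 < k := by
    apply hppos (u0 : E) u0.2
    intro h
    rw [h] at hu0norm
    simp at hu0norm
  -- homogeneity of p
  have phomog : ∀ (t : ℝ), 0 ≤ t → ∀ X : E, p (t • X) = t * p X := by
    intro t ht X
    rw [hp]
    simp only [Finset.mul_sum]
    refine Finset.sum_congr rfl fun α _ => ?_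
    rw [real_inner_smul_right]
    rcases le_or_gt 0 ⟪α - m, X⟫_ℝ with h | h
    · rw [max_eq_left (by nlinarith), max_eq_left h]
    · rw [max_eq_right (by nlinarith), max_eq_right (le_of_lt h), mul_zero]
  -- lower bound: k‖x‖ ≤ p x on L
  have hlow : ∀ x : L, k * ‖(x : E)‖ ≤ p (x : E) := by
    intro x
    by_cases hx0 : (x : E) = 0
    · simp [hx0, hp]
    have hxn : ‖(x : E)‖ ≠ 0 := norm_ne_zero_iff.mpr hx0
    have hxnn : (0:ℝ) < ‖(x : E)‖ := norm_pos_iff.mpr hx0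
    set u : L := (‖(x:E)‖⁻¹ : ℝ) • x with hu
    have hus : u ∈ Metric.sphere (0 : L) 1 := by
      simp only [Metric.mem_sphere, dist_zero_right, hu, norm_smul, norm_inv,
        Real.norm_eq_abs, abs_norm]
      rw [show ‖(x : L)‖ = ‖(x : E)‖ from rfl]
      exact inv_mul_cancel₀ hxn
    have hle : k ≤ q u := hu0min hus
    have hqu : q u = ‖(x:E)‖⁻¹ * p (x : E) := by
      show p ((u : E)) = _
      have hcoe : ((u : E)) = ‖(x:E)‖⁻¹ • (x : E) := rfl
      rw [hcoe, phomog _ (by positivity)]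
    rw [hqu] at hle
    calc k * ‖(x:E)‖ ≤ (‖(x:E)‖⁻¹ * p (x:E)) * ‖(x:E)‖ := by nlinarith
      _ = p (x : E) := by field_simp
  -- existence of a good α for each x
  have hgood : ∀ x : L, (x : E) ≠ 0 → ∃ α ∈ s, k / n * ‖(x:E)‖ ≤ ⟪α - m, (x:E)⟫_ℝ := by
    intro x hx0
    have hxnn : (0:ℝ) < ‖(x : E)‖ := norm_pos_iff.mpr hx0
    have hsum : ∑ _α ∈ s, (k / n * ‖(x:E)‖) ≤ ∑ α ∈ s, max ⟪α - m, (x:E)⟫_ℝ 0 := by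
      rw [Finset.sum_const, hn, nsmul_eq_mul]
      have : (s.card : ℝ) * (k / s.card * ‖(x:E)‖) = k * ‖(x:E)‖ := by
        field_simp
      rw [this]
      exact hlow x
    obtain ⟨α, hα, hle⟩ := Finset.exists_le_of_sum_le hs hsum
    refine ⟨α, hα, ?_⟩
    have hkn : 0 < k / n * ‖(x:E)‖ := by positivity
    rcases le_max_iff.mp (le_trans (le_refl _) hle) with h | h
    · exact h
    · linarith
  -- coercivity bound
  set c0 : ℝ := s.inf' hs c with hc0
  have hc0pos : 0 < c0 := by
    obtain ⟨α, hα, hαeq⟩ := Finset.exists_mem_eq_inf' hs c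
    rw [hc0, hαeq]; exact hc α hα
  set κ : ℝ := 2 * (k / n) with hκ
  have hκpos : 0 < κ := by positivity
  have hFlow : ∀ x : L, c0 * Real.exp (κ * ‖(x:E)‖) ≤ F (x : E) := by
    intro x
    by_cases hx0 : (x : E) = 0
    · rw [hx0]
      simp only [norm_zero, mul_zero, Real.exp_zero, mul_one]
      obtain ⟨α, hα⟩ := hs
      have h1 : c0 ≤ c α := Finset.inf'_le c hα
      have h2 : c α = c α * Real.exp (2 * ⟪α - m, (0:E)⟫_ℝ) := by simp
      calc c0 ≤ c α := h1
        _ = c α * Real.exp (2 * ⟪α - m, (0:E)⟫_ℝ) := h2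
        _ ≤ F 0 := Finset.single_le_sum
            (f := fun β => c β * Real.exp (2 * ⟪β - m, (0:E)⟫_ℝ))
            (fun β hβ => le_of_lt (mul_pos (hc β hβ) (Real.exp_pos _))) hα
    · obtain ⟨α, hα, hip⟩ := hgood x hx0
      have h1 : c0 * Real.exp (κ * ‖(x:E)‖) ≤ c α * Real.exp (2 * ⟪α - m, (x:E)⟫_ℝ) := by
        have e1 : Real.exp (κ * ‖(x:E)‖) ≤ Real.exp (2 * ⟪α - m, (x:E)⟫_ℝ) := by
          apply Real.exp_le_exp.mpr
          rw [hκ]; nlinarith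
        have e2 : c0 ≤ c α := Finset.inf'_le c hα
        nlinarith [Real.exp_pos (κ * ‖(x:E)‖), Real.exp_pos (2 * ⟪α - m, (x:E)⟫_ℝ)]
      calc c0 * Real.exp (κ * ‖(x:E)‖) ≤ c α * Real.exp (2 * ⟪α - m, (x:E)⟫_ℝ) := h1
        _ ≤ F (x : E) := Finset.single_le_sum
            (f := fun β => c β * Real.exp (2 * ⟪β - m, (x:E)⟫_ℝ))
            (fun β hβ => le_of_lt (mul_pos (hc β hβ) (Real.exp_pos _))) hα
  -- F∘val tends to infinity on cocompact
  have htend : Filter.Tendsto (fun x : L => F (x : E)) (Filter.cocompact L) Filter.atTop := by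
    have h1 : Filter.Tendsto (fun x : L => ‖x‖) (Filter.cocompact L) Filter.atTop :=
      tendsto_norm_cocompact_atTop
    have h2 : Filter.Tendsto (fun t : ℝ => c0 * Real.exp (κ * t)) Filter.atTop Filter.atTop := by
      apply Filter.Tendsto.const_mul_atTop hc0pos
      exact Real.tendsto_exp_atTop.comp (Filter.Tendsto.const_mul_atTop hκpos Filter.tendsto_id)
    apply Filter.tendsto_atTop_mono _ (h2.comp h1)
    intro x
    exact hFlow x
  obtain ⟨x0, hx0min⟩ := (hFcont.comp continuous_subtype_val).exists_forall_le htend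
  -- stationarity
  set G : E := ∑ α ∈ s, (c α * Real.exp (2 * ⟪α - m, (x0:E)⟫_ℝ)) • (α - m) with hG
  have hGmem : G ∈ L := Submodule.sum_mem L fun α hα =>
    Submodule.smul_mem L _ (hmemL α hα)
  have hstat : ∀ Y : L, ⟪G, (Y : E)⟫_ℝ = 0 := by
    intro Y
    set φ : ℝ → ℝ := fun t => ∑ α ∈ s,
      c α * Real.exp (2 * (⟪α - m, (x0:E)⟫_ℝ + t * ⟪α - m, (Y:E)⟫_ℝ)) with hφ
    have hφF : ∀ t : ℝ, φ t = F ((x0 : E) + t • (Y : E)) := by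
      intro t
      rw [hφ, hF]
      refine Finset.sum_congr rfl fun α _ => ?_
      rw [inner_add_right, real_inner_smul_right]
    have hmin : IsLocalMin φ 0 := by
      apply Filter.Eventually.of_forall
      intro t
      rw [hφF t, hφF 0]
      simp only [zero_smul, add_zero]
      exact hx0min ⟨(x0 : E) + t • (Y : E), Submodule.add_mem L x0.2
        (Submodule.smul_mem L t Y.2)⟩
    have hderiv : HasDerivAt φ
        (∑ α ∈ s, c α * (Real.exp (2 * (⟪α - m, (x0:E)⟫_ℝ + 0 * ⟪α - m, (Y:E)⟫_ℝ)) *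
          (2 * ⟪α - m, (Y:E)⟫_ℝ))) 0 := by
      apply HasDerivAt.fun_sum
      intro α _
      have h1 : HasDerivAt (fun t : ℝ => ⟪α - m, (x0:E)⟫_ℝ + t * ⟪α - m, (Y:E)⟫_ℝ)
          ⟪α - m, (Y:E)⟫_ℝ 0 := by
        simpa using (hasDerivAt_mul_const ⟪α - m, (Y:E)⟫_ℝ (x := 0)).const_add
          ⟪α - m, (x0:E)⟫_ℝ
      have h2 := ((h1.const_mul 2).exp).const_mul (c α)
      simpa [mul_comm, mul_assoc, mul_left_comm] using h2
    have hD := hmin.hasDerivAt_eq_zero hderiv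
    have hGip : ⟪G, (Y : E)⟫_ℝ = ∑ α ∈ s,
        (c α * Real.exp (2 * ⟪α - m, (x0:E)⟫_ℝ)) * ⟪α - m, (Y:E)⟫_ℝ := by
      rw [hG, sum_inner]
      exact Finset.sum_congr rfl fun α _ => real_inner_smul_left _ _ _
    have hDval : (∑ α ∈ s, c α * (Real.exp (2 * (⟪α - m, (x0:E)⟫_ℝ +
        0 * ⟪α - m, (Y:E)⟫_ℝ)) * (2 * ⟪α - m, (Y:E)⟫_ℝ))) =
        2 * ⟪G, (Y : E)⟫_ℝ := by
      rw [hGip, Finset.mul_sum]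
      refine Finset.sum_congr rfl fun α _ => by ring_nf
    rw [hDval] at hD
    linarith
  have hG0 : G = 0 := by
    have := hstat ⟨G, hGmem⟩
    exact inner_self_eq_zero.mp this
  exact ⟨(x0 : E), x0.2, hG0⟩

end Helpers

section Helpers2

lemma momentMap_inner {E V : Type*} [NormedAddCommGroup E] [InnerProductSpace ℝ E]
    [FiniteDimensional ℝ E] [NormedAddCommGroup V] [InnerProductSpace ℝ V]
    (π : E →ₗ[ℝ] V →L[ℝ] V) (v : V) (Y : E) :
    ⟪momentMap π v, Y⟫_ℝ = ⟪(π Y) v, v⟫_ℝ / ‖v‖ ^ 2 := by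
  unfold momentMap
  rw [InnerProductSpace.toDual_symm_apply]
  rfl

lemma wt_orth {E V : Type*} [NormedAddCommGroup E] [InnerProductSpace ℝ E]
    [NormedAddCommGroup V] [InnerProductSpace ℝ V]
    (π : E →ₗ[ℝ] V →L[ℝ] V) (𝔞 : Submodule ℝ E)
    (hsa : ∀ X ∈ 𝔞, ∀ v w : V, ⟪(π X) v, w⟫_ℝ = ⟪v, (π X) w⟫_ℝ)
    {α β : E} (hα : α ∈ 𝔞) (hβ : β ∈ 𝔞) (hne : α ≠ β)
    {v u : V} (hv : v ∈ wtSpace π 𝔞 α) (hu : u ∈ wtSpace π 𝔞 β) :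
    ⟪v, u⟫_ℝ = 0 := by
  have hX : α - β ∈ 𝔞 := Submodule.sub_mem _ hα hβ
  have h1 : ⟪(π (α - β)) v, u⟫_ℝ = ⟪α, α - β⟫_ℝ * ⟪v, u⟫_ℝ := by
    rw [hv (α - β) hX, real_inner_smul_left]
  have h2 : ⟪(π (α - β)) v, u⟫_ℝ = ⟪β, α - β⟫_ℝ * ⟪v, u⟫_ℝ := by
    rw [hsa (α - β) hX, hu (α - β) hX, real_inner_smul_right]
  have h3 : ⟪α - β, α - β⟫_ℝ * ⟪v, u⟫_ℝ = 0 := by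
    rw [inner_sub_left]
    linarith [h1, h2]
  have h4 : ⟪α - β, α - β⟫_ℝ ≠ 0 := by
    rw [inner_self_ne_zero]
    exact sub_ne_zero.mpr hne
  exact (mul_eq_zero.mp h3).resolve_left h4

lemma inner_sum_sum_orth {V : Type*} [NormedAddCommGroup V] [InnerProductSpace ℝ V]
    {ι : Type*} (s : Finset ι) (f g : ι → ℝ) (u : ι → V)
    (horth : ∀ i ∈ s, ∀ j ∈ s, i ≠ j → ⟪u i, u j⟫_ℝ = 0) :
    ⟪∑ i ∈ s, f i • u i, ∑ j ∈ s, g j • u j⟫_ℝ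
      = ∑ i ∈ s, f i * g i * ⟪u i, u i⟫_ℝ := by
  rw [sum_inner]
  refine Finset.sum_congr rfl fun i hi => ?_
  rw [inner_sum]
  rw [Finset.sum_eq_single i]
  · rw [real_inner_smul_left, real_inner_smul_right]; ring
  · intro j hj hne
    rw [real_inner_smul_left, real_inner_smul_right, horth i hi j hj (Ne.symm hne)]
    ring
  · intro h; exact absurd hi h

end Helpers2

/-- if `W` is a nice space, `w ∈ W∖{0}` and `mcc(R(w))` lies in the intrinsic
interior of the convex hull of `R(w)`, then there is `X ∈ 𝔞` such that `w̃ = exp(π X)w`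
satisfies `m_𝔤(w̃) = mcc(R(w))` and `π(m_𝔤(w̃))w̃ = ‖mcc(R(w))‖²w̃`; in particular the
orbit of `w` contains a critical point of the norm squared of the moment map. -/
theorem distinguished_of_mcc_mem_intrinsicInterior
    {𝔤 V : Type*} [NormedAddCommGroup 𝔤] [InnerProductSpace ℝ 𝔤] [FiniteDimensional ℝ 𝔤]
    [NormedAddCommGroup V] [InnerProductSpace ℝ V] [FiniteDimensional ℝ V]
    -- the Lie bracket of `𝔤` and the representation `π : 𝔤 → 𝔤𝔩(V)`:
    (bk : 𝔤 →ₗ[ℝ] 𝔤 →ₗ[ℝ] 𝔤)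
    (hbk_alt : ∀ X : 𝔤, bk X X = 0)
    (hbk_jac : ∀ X Y Z : 𝔤, bk X (bk Y Z) + bk Y (bk Z X) + bk Z (bk X Y) = 0)
    (π : 𝔤 →ₗ[ℝ] V →L[ℝ] V)
    (hrep : ∀ X Y : 𝔤, π (bk X Y) = π X * π Y - π Y * π X)
    -- `𝔞` is an abelian subalgebra acting by self-adjoint operators:
    (𝔞 : Submodule ℝ 𝔤)
    (hab : ∀ X ∈ 𝔞, ∀ Y ∈ 𝔞, bk X Y = 0)
    (hsa : ∀ X ∈ 𝔞, ∀ v w : V, ⟪(π X) v, w⟫_ℝ = ⟪v, (π X) w⟫_ℝ)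
    -- roots and weights:
    (Δ𝔤 : Finset 𝔤) (hΔ𝔤 : ∀ γ ∈ Δ𝔤, γ ∈ 𝔞 ∧ γ ≠ 0)
    (ΔV : Finset 𝔤) (hΔV : ∀ α ∈ ΔV, α ∈ 𝔞)
    -- `𝔤₀ = 𝔞 ⊕ 𝔪` is the centralizer of `𝔞`, `π` is skew-adjoint on `𝔪`:
    (𝔪 : Submodule ℝ 𝔤)
    (hskew : ∀ Y ∈ 𝔪, ∀ v w : V, ⟪(π Y) v, w⟫_ℝ = -⟪v, (π Y) w⟫_ℝ)
    (h𝔞𝔪 : ∀ X ∈ 𝔞, ∀ Y ∈ 𝔪, ⟪X, Y⟫_ℝ = 0)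
    (h𝔤₀ : ∀ Z : 𝔤, (∀ X ∈ 𝔞, bk X Z = 0) ↔ Z ∈ 𝔞 ⊔ 𝔪)
    -- the orthogonal restricted-root space decomposition of `𝔤`:
    (h𝔤dec : (𝔞 ⊔ 𝔪) ⊔ (⨆ γ ∈ Δ𝔤, rootSpace bk 𝔞 γ) = ⊤)
    (h𝔤orth : ∀ γ ∈ Δ𝔤, ∀ Y ∈ rootSpace bk 𝔞 γ, ∀ Z : 𝔤,
      (Z ∈ 𝔞 ⊔ 𝔪 ∨ ∃ γ' ∈ Δ𝔤, γ' ≠ γ ∧ Z ∈ rootSpace bk 𝔞 γ') → ⟪Y, Z⟫_ℝ = 0)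
    -- the weight space decomposition of `V`:
    (hVdec : (⨆ α ∈ ΔV, wtSpace π 𝔞 α) = ⊤)
    (W : Submodule ℝ V) (hW : IsNiceSpace π 𝔞 W)
    (w : V) (hw : w ∈ W) (hw0 : w ≠ 0)
    -- `cc α` is the component of `w` in the weight space `V_α`:
    (cc : 𝔤 → V) (hcc : ∀ α ∈ ΔV, cc α ∈ wtSpace π 𝔞 α) (hwsum : w = ∑ α ∈ ΔV, cc α)
    (Rw : Finset 𝔤) (hRw : Rw = ΔV.filter fun α => cc α ≠ 0)
    -- `mcc` is the (unique) point of minimal norm in the convex hull of `R(w)`: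
    (mcc : 𝔤) (hmcc₁ : mcc ∈ convexHull ℝ (Rw : Set 𝔤))
    (hmcc₂ : ∀ y ∈ convexHull ℝ (Rw : Set 𝔤), ‖mcc‖ ≤ ‖y‖)
    (hint : mcc ∈ intrinsicInterior ℝ (convexHull ℝ (Rw : Set 𝔤)))
    :
    ∃ X ∈ 𝔞, momentMap π ((NormedSpace.exp (π X)) w) = mcc ∧
      (π (momentMap π ((NormedSpace.exp (π X)) w))) ((NormedSpace.exp (π X)) w) =
        (‖mcc‖ ^ 2) • (NormedSpace.exp (π X)) w := by
  classical
  have hRwsub : Rw ⊆ ΔV := by rw [hRw]; exact Finset.filter_subset _ _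
  have hRw𝔞 : ∀ α ∈ Rw, α ∈ 𝔞 := fun α hα => hΔV α (hRwsub hα)
  have hccne : ∀ α ∈ Rw, cc α ≠ 0 := by
    intro α hα; rw [hRw] at hα; exact (Finset.mem_filter.mp hα).2
  have hccz : ∀ α ∈ ΔV, α ∉ Rw → cc α = 0 := by
    intro α hα hn
    by_contra h
    exact hn (by rw [hRw]; exact Finset.mem_filter.mpr ⟨hα, h⟩)
  have hRwne : Rw.Nonempty := by
    rw [Finset.nonempty_iff_ne_empty]
    intro h
    apply hw0
    rw [hwsum]
    exact Finset.sum_eq_zero fun α hα =>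
      hccz α hα (by rw [h]; exact Finset.notMem_empty α)
  have hmcc𝔞 : mcc ∈ 𝔞 := by
    have hsub : (Rw : Set 𝔤) ⊆ (𝔞 : Set 𝔤) := fun α hα => hRw𝔞 α hα
    exact convexHull_min hsub 𝔞.convex hmcc₁
  set Sconv : Set 𝔤 := convexHull ℝ (Rw : Set 𝔤) with hSconv
  have hαaff : ∀ α ∈ Rw, α - mcc ∈ (affineSpan ℝ Sconv).direction := by
    intro α hα
    have h1 : α ∈ affineSpan ℝ Sconv :=
      subset_affineSpan ℝ _ (subset_convexHull ℝ _ hα)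
    have h2 : mcc ∈ affineSpan ℝ Sconv := subset_affineSpan ℝ _ hmcc₁
    simpa using AffineSubspace.vsub_mem_direction h1 h2
  -- Step B : on Rw, ⟪α, mcc⟫ = ‖mcc‖²
  have hB : ∀ α ∈ Rw, ⟪α, mcc⟫_ℝ = ‖mcc‖ ^ 2 := by
    intro α hα
    have hconv : Convex ℝ Sconv := convex_convexHull ℝ _
    have h1 : 0 ≤ ⟪α - mcc, mcc⟫_ℝ :=
      varineq hconv hmcc₁ hmcc₂ (subset_convexHull ℝ _ hα)
    have h2 : ⟪α - mcc, mcc⟫_ℝ ≤ 0 := by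
      obtain ⟨δ, hδ, hmem⟩ := exists_pos_forward hint
        (Submodule.neg_mem _ (hαaff α hα))
      have h3 := varineq hconv hmcc₁ hmcc₂ hmem
      rw [add_sub_cancel_left, real_inner_smul_left, inner_neg_left] at h3
      nlinarith
    have h4 : ⟪α - mcc, mcc⟫_ℝ = 0 := le_antisymm h2 h1
    rw [inner_sub_left] at h4
    have hnorm : ⟪mcc, mcc⟫_ℝ = ‖mcc‖ ^ 2 := real_inner_self_eq_norm_sq mcc
    linarith
  -- coefficient setup
  set c : 𝔤 → ℝ := fun α => ⟪cc α, cc α⟫_ℝ with hcdef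
  have hcpos : ∀ α ∈ Rw, 0 < c α := by
    intro α hα
    have h0 : 0 < ‖cc α‖ := norm_pos_iff.mpr (hccne α hα)
    rw [hcdef]
    simp only
    rw [real_inner_self_eq_norm_sq]
    positivity
  have hposdir : ∀ X : 𝔤,
      X ∈ Submodule.span ℝ ((fun α => α - mcc) '' (Rw : Set 𝔤)) → X ≠ 0 →
      ∃ α ∈ Rw, 0 < ⟪α - mcc, X⟫_ℝ := by
    intro X hXL hX0
    have hXdir : X ∈ (affineSpan ℝ Sconv).direction := by
      refine Submodule.span_le.mpr ?_ hXL
      rintro _ ⟨α, hα, rfl⟩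
      exact hαaff α hα
    obtain ⟨δ, hδ, hmem⟩ := exists_pos_forward hint hXdir
    rw [hSconv, Finset.mem_convexHull] at hmem
    obtain ⟨ω, hω0, hω1, hωc⟩ := hmem
    have hcm : mcc + δ • X = ∑ α ∈ Rw, ω α • α := by
      rw [← hωc, Finset.centerMass_eq_of_sum_1 _ _ hω1]
      rfl
    by_contra hcon
    push_neg at hcon
    have hkey : ⟪(mcc + δ • X) - mcc, X⟫_ℝ ≤ 0 := by
      have hsub : (mcc + δ • X) - mcc = ∑ α ∈ Rw, ω α • (α - mcc) := by
        rw [hcm]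
        have : (∑ α ∈ Rw, ω α • (α - mcc))
            = ∑ α ∈ Rw, ω α • α - (∑ α ∈ Rw, ω α) • mcc := by
          rw [Finset.sum_smul, ← Finset.sum_sub_distrib]
          exact Finset.sum_congr rfl fun α _ => smul_sub _ _ _
        rw [this, hω1, one_smul]
      rw [hsub, sum_inner]
      apply Finset.sum_nonpos
      intro α hα
      rw [real_inner_smul_left]
      exact mul_nonpos_of_nonneg_of_nonpos (hω0 α hα) (hcon α hα)
    rw [add_sub_cancel_left, real_inner_smul_left, real_inner_self_eq_norm_sq] at hkey
    have hXn : 0 < ‖X‖ := norm_pos_iff.mpr hX0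
    nlinarith [mul_pos hδ (pow_pos hXn 2)]
  obtain ⟨X₀, hX₀L, hstat0⟩ := exists_stationary Rw hRwne c hcpos mcc hposdir
  have hL𝔞 : Submodule.span ℝ ((fun α => α - mcc) '' (Rw : Set 𝔤)) ≤ 𝔞 := by
    rw [Submodule.span_le]
    rintro _ ⟨α, hα, rfl⟩
    exact Submodule.sub_mem _ (hRw𝔞 α hα) hmcc𝔞
  have hX₀𝔞 : X₀ ∈ 𝔞 := hL𝔞 hX₀L
  set e : 𝔤 → ℝ := fun α => Real.exp ⟪α, X₀⟫_ℝ with hedef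
  have hepos : ∀ α, 0 < e α := fun α => Real.exp_pos _
  -- rewrite stationarity
  have hstat1 : ∑ α ∈ Rw, (c α * (e α) ^ 2) • (α - mcc) = 0 := by
    have key : ∀ α ∈ Rw, c α * Real.exp (2 * ⟪α - mcc, X₀⟫_ℝ)
        = Real.exp (-(2 * ⟪mcc, X₀⟫_ℝ)) * (c α * (e α) ^ 2) := by
      intro α hα
      have h1 : 2 * ⟪α - mcc, X₀⟫_ℝ
          = (⟪α, X₀⟫_ℝ + ⟪α, X₀⟫_ℝ) + (-(2 * ⟪mcc, X₀⟫_ℝ)) := by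
        rw [inner_sub_left]; ring
      rw [h1, Real.exp_add, Real.exp_add]
      simp only [hedef]
      ring
    have h2 : ∑ α ∈ Rw, (c α * Real.exp (2 * ⟪α - mcc, X₀⟫_ℝ)) • (α - mcc)
        = Real.exp (-(2 * ⟪mcc, X₀⟫_ℝ)) • ∑ α ∈ Rw, (c α * (e α) ^ 2) • (α - mcc) := by
      rw [Finset.smul_sum]
      refine Finset.sum_congr rfl fun α hα => ?_
      rw [key α hα, smul_smul]
    rw [h2] at hstat0
    exact (smul_eq_zero.mp hstat0).resolve_left (Real.exp_ne_zero _)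
  have hstat2 : ∑ α ∈ Rw, (c α * (e α) ^ 2) • α
      = (∑ α ∈ Rw, c α * (e α) ^ 2) • mcc := by
    have h1 : ∑ α ∈ Rw, (c α * (e α) ^ 2) • (α - mcc)
        = ∑ α ∈ Rw, (c α * (e α) ^ 2) • α - (∑ α ∈ Rw, c α * (e α) ^ 2) • mcc := by
      rw [Finset.sum_smul, ← Finset.sum_sub_distrib]
      exact Finset.sum_congr rfl fun α _ => smul_sub _ _ _
    rw [hstat1] at h1
    exact eq_of_sub_eq_zero h1.symm
  set S2 : ℝ := ∑ α ∈ Rw, c α * (e α) ^ 2 with hS2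
  have hS2pos : 0 < S2 :=
    Finset.sum_pos (fun α hα => mul_pos (hcpos α hα) (pow_pos (hepos α) 2)) hRwne
  -- the transformed vector
  set w' : V := NormedSpace.exp (π X₀) w with hw'def
  have hw'sum : w' = ∑ α ∈ Rw, e α • cc α := by
    rw [hw'def, hwsum, map_sum]
    have h1 : ∀ α ∈ ΔV, NormedSpace.exp (π X₀) (cc α) = e α • cc α := by
      intro α hα
      exact exp_apply_eigen_s4 _ _ _ (hcc α hα X₀ hX₀𝔞)
    rw [Finset.sum_congr rfl h1]
    exact (Finset.sum_subset hRwsub fun α hα hnα => by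
      rw [hccz α hα hnα, smul_zero]).symm
  have horth : ∀ α ∈ Rw, ∀ β ∈ Rw, α ≠ β → ⟪cc α, cc β⟫_ℝ = 0 := by
    intro α hα β hβ hne
    exact wt_orth π 𝔞 hsa (hRw𝔞 α hα) (hRw𝔞 β hβ) hne
      (hcc α (hRwsub hα)) (hcc β (hRwsub hβ))
  have hw'ip : ⟪w', w'⟫_ℝ = S2 := by
    rw [hw'sum, inner_sum_sum_orth Rw e e cc horth, hS2]
    exact Finset.sum_congr rfl fun α hα => by rw [hcdef]; ring
  have hw'ne : w' ≠ 0 := by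
    intro h
    rw [h] at hw'ip
    simp only [inner_zero_left] at hw'ip
    linarith
  have hnormw' : ‖w'‖ ^ 2 = S2 := by
    rw [← real_inner_self_eq_norm_sq]
    exact hw'ip
  have hw'W : w' ∈ W := by
    apply exp_apply_mem _ W (Submodule.closed_of_finiteDimensional W) _ w hw
    intro v hv
    exact hW.1 X₀ hX₀𝔞 v hv
  have hm𝔞 : momentMap π w' ∈ 𝔞 := hW.2 w' hw'W hw'ne
  have hπw' : ∀ Y, Y ∈ 𝔞 → (π Y) w' = ∑ α ∈ Rw, (⟪α, Y⟫_ℝ * e α) • cc α := by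
    intro Y hY
    rw [hw'sum, map_sum]
    refine Finset.sum_congr rfl fun α hα => ?_
    rw [map_smul, hcc α (hRwsub hα) Y hY, smul_smul, mul_comm]
  have hinnerY : ∀ Y, Y ∈ 𝔞 → ⟪momentMap π w', Y⟫_ℝ = ⟪mcc, Y⟫_ℝ := by
    intro Y hY
    rw [momentMap_inner, hnormw']
    have h1 : ⟪(π Y) w', w'⟫_ℝ
        = ∑ α ∈ Rw, (⟪α, Y⟫_ℝ * e α) * e α * c α := by
      rw [hπw' Y hY, hw'sum]
      exact inner_sum_sum_orth Rw _ e cc horth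
    have h2 : ∑ α ∈ Rw, (⟪α, Y⟫_ℝ * e α) * e α * c α
        = ⟪∑ α ∈ Rw, (c α * (e α) ^ 2) • α, Y⟫_ℝ := by
      rw [sum_inner]
      refine Finset.sum_congr rfl fun α hα => ?_
      rw [real_inner_smul_left]
      ring
    rw [h1, h2, hstat2, real_inner_smul_left]
    rw [mul_comm, mul_div_assoc, div_self (ne_of_gt hS2pos), mul_one]
  have hmeq : momentMap π w' = mcc := by
    have hd : momentMap π w' - mcc ∈ 𝔞 := Submodule.sub_mem _ hm𝔞 hmcc𝔞
    have h1 := hinnerY _ hd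
    have h2 : ⟪momentMap π w' - mcc, momentMap π w' - mcc⟫_ℝ = 0 := by
      rw [inner_sub_left]
      linarith
    have h3 := inner_self_eq_zero.mp h2
    rwa [sub_eq_zero] at h3
  refine ⟨X₀, hX₀𝔞, ?_, ?_⟩
  · rw [← hw'def]; exact hmeq
  · rw [← hw'def, hmeq]
    have h1 : (π mcc) w' = ∑ α ∈ Rw, (⟪α, mcc⟫_ℝ * e α) • cc α := hπw' mcc hmcc𝔞
    have h2 : ∑ α ∈ Rw, (⟪α, mcc⟫_ℝ * e α) • cc α
        = (‖mcc‖ ^ 2) • ∑ α ∈ Rw, e α • cc α := by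
      rw [Finset.smul_sum]
      refine Finset.sum_congr rfl fun α hα => ?_
      rw [hB α hα, smul_smul]
    rw [h1, h2, ← hw'sum]
end
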